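/- Let k ≥ 3 and λ_1,…,λ_k, μ_1,…,μ_k be positive reals. Define θ_1 = (λ_1⋯λ_k)/(μ_2⋯μ_k), θ_2 = ((λ_1+μ_2)/λ_1)·θ_1, and θ_i = (μ_2⋯μ_{i-1})/(λ_1⋯λ_{i-1})·(λ_{i-1}+μ_i)·θ_1 for 3 ≤ i ≤ k. Then (θ_1,…,θ_k) satisfies the traffic equations θ_i = λ̄_i + Σ_{j=1}^k θ_j P_{j,i}, where λ̄_i = 0 for i < k, λ̄_k = λ_k, and the routing probabilities are P_{1,2} = 1, P_{i,i-1} = λ_{i-1}/(λ_{i-1}+μ_i) for 2 ≤ i ≤ k, P_{i,i+1} = μ_i/(λ_{i-1}+μ_i) for 2 ≤ i ≤ k−1, with all other entries zero. -/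

import Mathlib

open Finset

/-- The explicit solution of the traffic equations for the birth–death-type
open Jackson network with external arrivals only at station `k`. -/
theorem traffic_equations_solution
    (k : ℕ) (hk : 3 ≤ k) (lam mu : ℕ → ℝ)
    (hlam : ∀ i ∈ Icc 1 k, 0 < lam i) (hmu : ∀ i ∈ Icc 1 k, 0 < mu i)
    (θ : ℕ → ℝ)
    (hθ1 : θ 1 = (∏ j ∈ Icc 1 k, lam j) / (∏ j ∈ Icc 2 k, mu j))
    (hθ2 : θ 2 = ((lam 1 + mu 2) / lam 1) * θ 1)
    (hθi : ∀ i, 3 ≤ i → i ≤ k →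
      θ i = ((∏ j ∈ Icc 2 (i - 1), mu j) / (∏ j ∈ Icc 1 (i - 1), lam j))
              * (lam (i - 1) + mu i) * θ 1)
    (P : ℕ → ℕ → ℝ)
    (hP : ∀ j i, P j i =
      if j = 1 ∧ i = 2 then 1
      else if 2 ≤ j ∧ j ≤ k ∧ i = j - 1 then lam (j - 1) / (lam (j - 1) + mu j)
      else if 2 ≤ j ∧ j ≤ k - 1 ∧ i = j + 1 then mu j / (lam (j - 1) + mu j)
      else 0)
    (lamBar : ℕ → ℝ)
    (hlamBar : ∀ i, i < k → lamBar i = 0) (hlamBark : lamBar k = lam k) :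
    ∀ i ∈ Icc 1 k, θ i = lamBar i + ∑ j ∈ Icc 1 k, θ j * P j i := by
  have hlam' : ∀ i, 1 ≤ i → i ≤ k → 0 < lam i := fun i h1 h2 => hlam i (mem_Icc.2 ⟨h1, h2⟩)
  have hmu' : ∀ i, 1 ≤ i → i ≤ k → 0 < mu i := fun i h1 h2 => hmu i (mem_Icc.2 ⟨h1, h2⟩)
  have hL : ∀ m, m ≤ k → 0 < ∏ j ∈ Icc 1 m, lam j := fun m hm =>
    Finset.prod_pos fun j hj => hlam' j (mem_Icc.1 hj).1 (le_trans (mem_Icc.1 hj).2 hm)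
  have hM : ∀ m, m ≤ k → 0 < ∏ j ∈ Icc 2 m, mu j := fun m hm =>
    Finset.prod_pos fun j hj =>
      hmu' j (le_trans one_le_two (mem_Icc.1 hj).1) (le_trans (mem_Icc.1 hj).2 hm)
  -- uniform formula for θ i, 2 ≤ i ≤ k
  have hθ' : ∀ i, 2 ≤ i → i ≤ k →
      θ i = ((∏ j ∈ Icc 2 (i - 1), mu j) / (∏ j ∈ Icc 1 (i - 1), lam j))
              * (lam (i - 1) + mu i) * θ 1 := by
    intro i h2 hik
    rcases eq_or_lt_of_le h2 with h | h
    · subst h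
      rw [hθ2, show (2:ℕ) - 1 = 1 from rfl, Finset.Icc_self, Finset.prod_singleton,
        Finset.Icc_eq_empty (by omega), Finset.prod_empty]
      ring
    · exact hθi i h hik
  obtain ⟨m, rfl⟩ : ∃ m, k = m + 3 := ⟨k - 3, by omega⟩
  intro i hi
  rw [mem_Icc] at hi
  have hrestrict : ∑ j ∈ (Icc 1 (m + 3)).filter (fun j => j = i - 1 ∨ j = i + 1), θ j * P j i
      = ∑ j ∈ Icc 1 (m + 3), θ j * P j i := by
    apply Finset.sum_filter_of_ne
    intro j hj hne
    rw [mem_Icc] at hj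
    rw [hP] at hne
    split_ifs at hne with h1 h2 h3
    · omega
    · omega
    · omega
    · exact absurd (mul_zero _) hne
  rw [← hrestrict]
  by_cases hi1 : i = 1
  · subst hi1
    have hset : (Icc 1 (m + 3)).filter (fun j => j = 1 - 1 ∨ j = 1 + 1) = {2} := by
      ext j
      simp only [mem_filter, mem_Icc, mem_singleton]
      omega
    rw [hset, Finset.sum_singleton, hP]
    rw [if_neg (by omega), if_pos (by omega : 2 ≤ 2 ∧ 2 ≤ m + 3 ∧ 1 = 2 - 1)]
    rw [hlamBar 1 (by omega), hθ2]
    have h1 : lam 1 ≠ 0 := ne_of_gt (hlam' 1 (by omega) (by omega))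
    have h2 : lam 1 + mu 2 ≠ 0 :=
      ne_of_gt (add_pos (hlam' 1 (by omega) (by omega)) (hmu' 2 (by omega) (by omega)))
    simp only [show (2:ℕ) - 1 = 1 from rfl]
    field_simp
    ring
  by_cases hi2 : i = 2
  · subst hi2
    have hset : (Icc 1 (m + 3)).filter (fun j => j = 2 - 1 ∨ j = 2 + 1) = {1, 3} := by
      ext j
      simp only [mem_filter, mem_Icc, mem_insert, mem_singleton]
      omega
    rw [hset, Finset.sum_pair (by omega : (1:ℕ) ≠ 3), hP, hP]
    rw [if_pos ⟨rfl, rfl⟩, if_neg (by omega),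
      if_pos (by omega : 2 ≤ 3 ∧ 3 ≤ m + 3 ∧ 2 = 3 - 1)]
    rw [hlamBar 2 (by omega), hθ2, hθi 3 (by omega) (by omega)]
    have e1 : Icc 2 (3 - 1) = {2} := rfl
    have e2 : Icc 1 (3 - 1) = {1, 2} := rfl
    rw [e1, e2, Finset.prod_singleton, Finset.prod_pair (by omega : (1:ℕ) ≠ 2)]
    have h1 : lam 1 ≠ 0 := ne_of_gt (hlam' 1 (by omega) (by omega))
    have h2 : lam 2 ≠ 0 := ne_of_gt (hlam' 2 (by omega) (by omega))
    have h3 : lam 2 + mu 3 ≠ 0 :=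
      ne_of_gt (add_pos (hlam' 2 (by omega) (by omega)) (hmu' 3 (by omega) (by omega)))
    simp only [show (3:ℕ) - 1 = 2 from rfl]
    field_simp
    ring
  by_cases hik : i = m + 3
  · subst hik
    have hset : (Icc 1 (m + 3)).filter (fun j => j = m + 3 - 1 ∨ j = m + 3 + 1) = {m + 2} := by
      ext j
      simp only [mem_filter, mem_Icc, mem_singleton]
      omega
    rw [hset, Finset.sum_singleton, hP]
    rw [if_neg (by omega), if_neg (by omega),
      if_pos (by omega : 2 ≤ m + 2 ∧ m + 2 ≤ m + 3 - 1 ∧ m + 3 = m + 2 + 1)]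
    rw [hlamBark]
    rw [hθ' (m + 3) (by omega) (by omega), hθ' (m + 2) (by omega) (by omega), hθ1]
    simp only [show m + 3 - 1 = m + 2 from rfl, show m + 2 - 1 = m + 1 from rfl]
    have eM2 : ∏ j ∈ Icc 2 (m + 2), mu j = (∏ j ∈ Icc 2 (m + 1), mu j) * mu (m + 2) :=
      Finset.prod_Icc_succ_top (by omega) mu
    have eM3 : ∏ j ∈ Icc 2 (m + 3), mu j = (∏ j ∈ Icc 2 (m + 2), mu j) * mu (m + 3) :=
      Finset.prod_Icc_succ_top (by omega) mu
    have eL2 : ∏ j ∈ Icc 1 (m + 2), lam j = (∏ j ∈ Icc 1 (m + 1), lam j) * lam (m + 2) :=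
      Finset.prod_Icc_succ_top (by omega) lam
    have eL3 : ∏ j ∈ Icc 1 (m + 3), lam j = (∏ j ∈ Icc 1 (m + 2), lam j) * lam (m + 3) :=
      Finset.prod_Icc_succ_top (by omega) lam
    rw [eM3, eM2, eL3, eL2]
    have nL : (∏ j ∈ Icc 1 (m + 1), lam j) ≠ 0 := (hL _ (by omega)).ne'
    have nM : (∏ j ∈ Icc 2 (m + 1), mu j) ≠ 0 := (hM _ (by omega)).ne'
    have n1 : lam (m + 2) ≠ 0 := (hlam' _ (by omega) (by omega)).ne'
    have n2 : lam (m + 3) ≠ 0 := (hlam' _ (by omega) (by omega)).ne'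
    have n3 : mu (m + 2) ≠ 0 := (hmu' _ (by omega) (by omega)).ne'
    have n4 : mu (m + 3) ≠ 0 := (hmu' _ (by omega) (by omega)).ne'
    have n5 : lam (m + 1) + mu (m + 2) ≠ 0 :=
      (add_pos (hlam' _ (by omega) (by omega)) (hmu' _ (by omega) (by omega))).ne'
    field_simp
    ring
  · -- middle case 3 ≤ i ≤ m + 2
    obtain ⟨n, rfl⟩ : ∃ n, i = n + 3 := ⟨i - 3, by omega⟩
    have hn : n + 3 ≤ m + 2 := by omega
    have hset : (Icc 1 (m + 3)).filter (fun j => j = n + 3 - 1 ∨ j = n + 3 + 1)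
        = {n + 2, n + 4} := by
      ext j
      simp only [mem_filter, mem_Icc, mem_insert, mem_singleton]
      omega
    rw [hset, Finset.sum_pair (by omega : n + 2 ≠ n + 4), hP, hP]
    rw [if_neg (by omega), if_neg (by omega),
      if_pos (by omega : 2 ≤ n + 2 ∧ n + 2 ≤ m + 3 - 1 ∧ n + 3 = n + 2 + 1),
      if_neg (by omega), if_pos (by omega : 2 ≤ n + 4 ∧ n + 4 ≤ m + 3 ∧ n + 3 = n + 4 - 1)]
    rw [hlamBar _ (by omega)]
    rw [hθ' (n + 3) (by omega) (by omega), hθ' (n + 2) (by omega) (by omega),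
      hθ' (n + 4) (by omega) (by omega)]
    simp only [show n + 3 - 1 = n + 2 from rfl, show n + 2 - 1 = n + 1 from rfl,
      show n + 4 - 1 = n + 3 from rfl]
    have eM2 : ∏ j ∈ Icc 2 (n + 2), mu j = (∏ j ∈ Icc 2 (n + 1), mu j) * mu (n + 2) :=
      Finset.prod_Icc_succ_top (by omega) mu
    have eM3 : ∏ j ∈ Icc 2 (n + 3), mu j = (∏ j ∈ Icc 2 (n + 2), mu j) * mu (n + 3) :=
      Finset.prod_Icc_succ_top (by omega) mu
    have eL2 : ∏ j ∈ Icc 1 (n + 2), lam j = (∏ j ∈ Icc 1 (n + 1), lam j) * lam (n + 2) :=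
      Finset.prod_Icc_succ_top (by omega) lam
    have eL3 : ∏ j ∈ Icc 1 (n + 3), lam j = (∏ j ∈ Icc 1 (n + 2), lam j) * lam (n + 3) :=
      Finset.prod_Icc_succ_top (by omega) lam
    rw [eM3, eM2, eL3, eL2]
    have nL : (∏ j ∈ Icc 1 (n + 1), lam j) ≠ 0 := (hL _ (by omega)).ne'
    have nM : (∏ j ∈ Icc 2 (n + 1), mu j) ≠ 0 := (hM _ (by omega)).ne'
    have n1 : lam (n + 2) ≠ 0 := (hlam' _ (by omega) (by omega)).ne'
    have n2 : lam (n + 3) ≠ 0 := (hlam' _ (by omega) (by omega)).ne'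
    have n3 : mu (n + 2) ≠ 0 := (hmu' _ (by omega) (by omega)).ne'
    have n4 : mu (n + 3) ≠ 0 := (hmu' _ (by omega) (by omega)).ne'
    have n5 : lam (n + 1) + mu (n + 2) ≠ 0 :=
      (add_pos (hlam' _ (by omega) (by omega)) (hmu' _ (by omega) (by omega))).ne'
    have n6 : lam (n + 3) + mu (n + 4) ≠ 0 :=
      (add_pos (hlam' _ (by omega) (by omega)) (hmu' _ (by omega) (by omega))).ne'
    field_simp
    ring
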